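/- If I is a nonzero proper ideal of a finite-dimensional regular Lie algebra L over an infinite field, then the quotient L/I is a nilpotent Lie algebra. -/

import Mathlib

open Polynomial Module LinearMap

lemma aux_charpoly_factor
    {K V : Type*} [Field K] [AddCommGroup V] [Module K V] [FiniteDimensional K V]
    (f : V →ₗ[K] V) (p : Submodule K V) (h : p ≤ p.comap f) :
    f.charpoly = (f.restrict (p := p) (q := p) (fun x hx => h hx)).charpoly *
      (p.mapQ p f h).charpoly := by
  obtain ⟨q, hq⟩ := p.exists_isCompl
  let e := Submodule.prodEquivOfIsCompl p q hq
  let g := Submodule.quotientEquivOfIsCompl p q hq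
  let bp := Module.finBasis K p
  let bq := Module.finBasis K q
  let b : Basis _ K V := (bp.prod bq).map e
  let bquot : Basis _ K (V ⧸ p) := bq.map g.symm
  set fr := f.restrict (p := p) (q := p) (fun x hx => h hx) with hfr
  set fq := p.mapQ p f h with hfq
  have hg : ∀ z : V, g (Submodule.Quotient.mk z) = (e.symm z).2 := by
    intro z
    set u := e.symm z with hu
    have hz : z = (u.1 : V) + u.2 := by
      rw [← Submodule.coe_prodEquivOfIsCompl' p q hq, hu, e.apply_symm_apply]
    rw [hz, Submodule.Quotient.mk_add, (Submodule.Quotient.mk_eq_zero p).mpr u.1.2, zero_add]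
    exact Submodule.quotientEquivOfIsCompl_apply_mk_coe hq u.2
  have hb : ∀ x : V, ∀ i, b.repr x i = (bp.prod bq).repr (e.symm x) i := by
    intro x i; rw [Basis.map_repr]; rfl
  have hbl : ∀ j, b (Sum.inl j) = (bp j : V) := by
    intro j
    show e ((bp.prod bq) (Sum.inl j)) = _
    rw [Submodule.coe_prodEquivOfIsCompl' p q hq, Basis.prod_apply_inl_fst,
      Basis.prod_apply_inl_snd]
    simp
  have hbr : ∀ j, b (Sum.inr j) = (bq j : V) := by
    intro j
    show e ((bp.prod bq) (Sum.inr j)) = _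
    rw [Submodule.coe_prodEquivOfIsCompl' p q hq, Basis.prod_apply_inr_fst,
      Basis.prod_apply_inr_snd]
    simp
  have key : toMatrix b b f =
      Matrix.fromBlocks (toMatrix bp bp fr) ((toMatrix b b f).toBlocks₁₂) 0
        (toMatrix bquot bquot fq) := by
    ext i j
    rcases i with i | i <;> rcases j with j | j
    · have hmem : f (bp j : V) ∈ p := h (bp j).2
      rw [Matrix.fromBlocks_apply₁₁, toMatrix_apply, toMatrix_apply, hbl, hb]
      rw [show e.symm (f (bp j : V)) = (⟨f (bp j : V), hmem⟩, 0) from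
        Submodule.prodEquivOfIsCompl_symm_apply_left p q hq ⟨_, hmem⟩]
      rw [Basis.prod_repr_inl]
      rfl
    · rfl
    · have hmem : f (bp j : V) ∈ p := h (bp j).2
      rw [Matrix.fromBlocks_apply₂₁, toMatrix_apply, hbl, hb]
      rw [show e.symm (f (bp j : V)) = (⟨f (bp j : V), hmem⟩, 0) from
        Submodule.prodEquivOfIsCompl_symm_apply_left p q hq ⟨_, hmem⟩]
      rw [Basis.prod_repr_inr]
      simp
    · rw [Matrix.fromBlocks_apply₂₂, toMatrix_apply, toMatrix_apply, hbr, hb,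
        Basis.prod_repr_inr]
      have h1 : bquot.repr (fq (bquot j)) i = bq.repr (g (fq (bquot j))) i := by
        rw [Basis.map_repr]; rfl
      have h2 : bquot j = Submodule.Quotient.mk (bq j : V) :=
        Submodule.quotientEquivOfIsCompl_symm_apply p q hq _
      rw [h1, h2, hfq, Submodule.mapQ_apply, hg]
  rw [← f.charpoly_toMatrix b, ← fr.charpoly_toMatrix bp, ← fq.charpoly_toMatrix bquot, key,
    Matrix.charpoly_fromBlocks_zero₂₁]

attribute [local instance] LieRing.ofAssociativeRing

/-- If `I` is a nonzero proper ideal of a finite-dimensional regular Lie algebra over an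
infinite field, then `L ⧸ I` is a nilpotent Lie algebra. -/
theorem quotient_by_nontrivial_ideal_of_regular_isNilpotent
    (K L : Type*) [Field K] [Infinite K] [LieRing L] [LieAlgebra K L]
    [Module.Finite K L]
    (hreg : ∀ x : L, x ≠ 0 → LieAlgebra.IsRegular K x)
    (I : LieIdeal K L) (hbot : I ≠ ⊥) (htop : I ≠ ⊤) :
    LieRing.IsNilpotent (L ⧸ I) := by
  classical
  set r := LieAlgebra.rank K L with hr
  set σ := LieModule.rank K L I with hσ
  set ρ := LieModule.rank K L (L ⧸ I) with hρ
  set m := Module.finrank K (L ⧸ I) with hm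
  have hinv : ∀ x : L, I.toSubmodule ≤ I.toSubmodule.comap (LieAlgebra.ad K L x) := by
    intro x y hy
    exact I.lie_mem hy
  -- the charpoly factorization, specialized
  have hfact : ∀ x : L, (LieAlgebra.ad K L x).charpoly =
      (LieModule.toEnd K L I x).charpoly * (LieModule.toEnd K L (L ⧸ I) x).charpoly := by
    intro x
    have h1 : LieModule.toEnd K L I x
        = (LieAlgebra.ad K L x).restrict (p := I.toSubmodule) (q := I.toSubmodule)
          (fun y hy => hinv x hy) := by ext y; rfl
    have h2 : LieModule.toEnd K L (L ⧸ I) x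
        = I.toSubmodule.mapQ I.toSubmodule (LieAlgebra.ad K L x) (hinv x) := by ext y; rfl
    rw [h1, h2]
    exact aux_charpoly_factor (LieAlgebra.ad K L x) I.toSubmodule (hinv x)
  have hmonI : ∀ x : L, (LieModule.toEnd K L I x).charpoly ≠ 0 :=
    fun x => (charpoly_monic _).ne_zero
  have hmonQ : ∀ x : L, (LieModule.toEnd K L (L ⧸ I) x).charpoly ≠ 0 :=
    fun x => (charpoly_monic _).ne_zero
  have htrail : ∀ x : L, (LieAlgebra.ad K L x).charpoly.natTrailingDegree =
      (LieModule.toEnd K L I x).charpoly.natTrailingDegree +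
      (LieModule.toEnd K L (L ⧸ I) x).charpoly.natTrailingDegree := by
    intro x
    rw [hfact x, natTrailingDegree_mul (hmonI x) (hmonQ x)]
  -- step: a nonzero element of I
  obtain ⟨y, hyI, hy0⟩ : ∃ y, y ∈ I ∧ y ≠ 0 := by
    by_contra hcon
    push_neg at hcon
    exact hbot (LieSubmodule.eq_bot_iff I |>.mpr hcon)
  have hy_quot : LieModule.toEnd K L (L ⧸ I) y = 0 := by
    ext z
    obtain ⟨z, rfl⟩ := LieSubmodule.Quotient.surjective_mk' I z
    show ⁅y, LieSubmodule.Quotient.mk' I z⁆ = 0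
    have : ⁅y, z⁆ ∈ I := lie_mem_left K L I y z hyI
    rw [← LieModuleHom.map_lie, LieSubmodule.Quotient.mk_eq_zero]
    exact this
  have hy_charQ : (LieModule.toEnd K L (L ⧸ I) y).charpoly = X ^ m := by
    rw [hy_quot]
    exact IsNilpotent.charpoly_eq_X_pow_finrank IsNilpotent.zero
  have hy_reg : (LieAlgebra.ad K L y).charpoly.natTrailingDegree = r :=
    (LieAlgebra.isRegular_iff_natTrailingDegree_charpoly_eq_rank K y).mp (hreg y hy0)
  have hy_eq : r = (LieModule.toEnd K L I y).charpoly.natTrailingDegree + m := by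
    rw [← hy_reg, htrail y, hy_charQ, natTrailingDegree_X_pow]
  have hσ_le : σ ≤ (LieModule.toEnd K L I y).charpoly.natTrailingDegree :=
    LieModule.rank_le_natTrailingDegree_charpoly_ad K I y
  -- generic element
  set b := Module.Free.chooseBasis K L with hbdef
  set P := (polyCharpoly (LieModule.toEnd K L I).toLinearMap b).coeff σ with hP
  set Q := (polyCharpoly (LieModule.toEnd K L (L ⧸ I)).toLinearMap b).coeff ρ with hQ
  have hPne : P ≠ 0 := LieModule.polyCharpoly_coeff_rank_ne_zero K L I b
  have hQne : Q ≠ 0 := LieModule.polyCharpoly_coeff_rank_ne_zero K L (L ⧸ I) b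
  obtain ⟨v, hv⟩ : ∃ v, MvPolynomial.eval v (P * Q) ≠ 0 := by
    by_contra hcon
    push_neg at hcon
    exact mul_ne_zero hPne hQne (MvPolynomial.funext (fun v => by rw [hcon v, map_zero]))
  rw [map_mul] at hv
  have hvP : MvPolynomial.eval v P ≠ 0 := left_ne_zero_of_mul hv
  have hvQ : MvPolynomial.eval v Q ≠ 0 := right_ne_zero_of_mul hv
  set x₀ := b.repr.symm (Finsupp.equivFunOnFinite.symm v) with hx₀
  have hrepr : ⇑(b.repr x₀) = v := by
    rw [hx₀, LinearEquiv.apply_symm_apply]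
    rfl
  have hIσ : (LieModule.toEnd K L I x₀).charpoly.natTrailingDegree = σ := by
    rw [← LieModule.isRegular_iff_natTrailingDegree_charpoly_eq_rank]
    rw [LieModule.isRegular_iff_coeff_polyCharpoly_rank_ne_zero K I b x₀, hrepr]
    exact hvP
  have hQρ : (LieModule.toEnd K L (L ⧸ I) x₀).charpoly.natTrailingDegree = ρ := by
    rw [← LieModule.isRegular_iff_natTrailingDegree_charpoly_eq_rank]
    rw [LieModule.isRegular_iff_coeff_polyCharpoly_rank_ne_zero K (L ⧸ I) b x₀, hrepr]
    exact hvQ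
  have hr_le : r ≤ σ + ρ := by
    have := LieAlgebra.rank_le_natTrailingDegree_charpoly_ad K x₀
    rw [htrail x₀, hIσ, hQρ] at this
    exact this
  have hρ_le : ρ ≤ m := LieModule.rank_le_finrank K L (L ⧸ I)
  have hρm : ρ = m := by omega
  -- conclude nilpotency
  rw [LieAlgebra.isNilpotent_iff_forall (R := K)]
  intro z
  obtain ⟨x, rfl⟩ := LieSubmodule.Quotient.surjective_mk' I z
  have had : LieAlgebra.ad K (L ⧸ I) (LieSubmodule.Quotient.mk' I x)
      = LieModule.toEnd K L (L ⧸ I) x := by ext w; rfl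
  rw [had]
  have htr : (LieModule.toEnd K L (L ⧸ I) x).charpoly.natTrailingDegree = m := by
    refine le_antisymm ?_ ?_
    · rw [hm, ← (LieModule.toEnd K L (L ⧸ I) x).charpoly_natDegree]
      exact natTrailingDegree_le_natDegree _
    · rw [← hρm]
      exact LieModule.rank_le_natTrailingDegree_charpoly_ad K (L ⧸ I) x
  exact ((charpoly_nilpotent_tfae (LieModule.toEnd K L (L ⧸ I) x)).out 3 0).mp htr
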